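/- arXiv:0802.4308 — 7 statements merged into one kernel-verified Lean document; each statement's English description precedes it below -/
import Mathlib

section
/- Let F ⊆ E be fields, let σ : E → E be a ring automorphism with σ ∘ σ = id which fixes F pointwise, and let ℓ : E → F be a nonzero F-linear map with ℓ(σ(z)) = ℓ(z) for all z ∈ E. Let V be an E-vector space and ĥ : V × V → E a map which is additive in each variable and E-linear in the first variable, and set h(v,w) = ℓ(ĥ(v,w)). Assume h(w,v) = −h(v,w) for all v,w ∈ V and h(a•v, w) = h(v, σ(a)•w) for all a ∈ E and v,w ∈ V. Then ĥ(w,v) = −σ(ĥ(v,w)) for all v,w ∈ V; moreover, if h is nondegenerate (h(v,w) = 0 for all w implies v = 0), then ĥ is nondegenerate. -/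
/-- Proposition 1.3.1 (first assertion): the E-valued form `bh` lifting the
nondegenerate alternating form `h = ℓ ∘ bh` is a nondegenerate σ-anti-hermitian form. -/
theorem stmt_0 {F E V : Type*} [Field F] [Field E] [Algebra F E]
    [AddCommGroup V] [Module E V]
    (σ : E →+* E) (hσ2 : ∀ z : E, σ (σ z) = z)
    (hσF : ∀ a : F, σ (algebraMap F E a) = algebraMap F E a)
    (ℓ : E →ₗ[F] F) (hℓ : ℓ ≠ 0)
    (hℓσ : ∀ z : E, ℓ (σ z) = ℓ z)
    (bh : V → V → E)
    (haddl : ∀ v v' w : V, bh (v + v') w = bh v w + bh v' w)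
    (haddr : ∀ v w w' : V, bh v (w + w') = bh v w + bh v w')
    (hsmul : ∀ (a : E) (v w : V), bh (a • v) w = a * bh v w)
    (halt : ∀ v w : V, ℓ (bh w v) = - ℓ (bh v w))
    (hadj : ∀ (a : E) (v w : V), ℓ (bh (a • v) w) = ℓ (bh v (σ a • w))) :
    (∀ v w : V, bh w v = - σ (bh v w)) ∧
    ((∀ v : V, (∀ w : V, ℓ (bh v w) = 0) → v = 0) →
      (∀ v : V, (∀ w : V, bh v w = 0) → v = 0)) := by
  have key : ∀ z : E, (∀ a : E, ℓ (a * z) = 0) → z = 0 := by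
    intro z hz
    by_contra hz0
    apply hℓ
    ext b
    have := hz (b * z⁻¹)
    rwa [mul_assoc, inv_mul_cancel₀ hz0, mul_one] at this
  constructor
  · intro v w
    have hz : ∀ a : E, ℓ (a * (bh w v + σ (bh v w))) = 0 := by
      intro a
      have h1 : ℓ (a * bh w v) = - ℓ (σ a * bh v w) := by
        have h3 := hadj (σ a) v w
        rw [hσ2] at h3
        rw [← hsmul a w v, halt, ← h3, hsmul]
      have h2 : ℓ (σ a * bh v w) = ℓ (a * σ (bh v w)) := by
        rw [← hℓσ (σ a * bh v w), map_mul, hσ2]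
      rw [mul_add, map_add, h1, h2]
      ring
    have := key _ hz
    linear_combination this
  · intro hnd v hv
    exact hnd v fun w => by rw [hv w, map_zero]
end

section
/- Let F ⊆ E be fields and ℓ : E → F a nonzero F-linear map. Let V be an E-vector space and ĥ : V × V → E a map which is additive in each variable and E-linear in the first variable, and set h(v,w) = ℓ(ĥ(v,w)). Then for every E-linear map g : V → V, one has h(g v, g w) = h(v,w) for all v,w ∈ V if and only if ĥ(g v, g w) = ĥ(v,w) for all v,w ∈ V. -/
/-- Proposition 1.3.1 (second assertion): an E-linear map preserves
`h = ℓ ∘ bh` if and only if it preserves `bh`. -/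
theorem stmt_1 {F E V : Type*} [Field F] [Field E] [Algebra F E]
    [AddCommGroup V] [Module E V]
    (ℓ : E →ₗ[F] F) (hℓ : ℓ ≠ 0)
    (bh : V → V → E)
    (haddl : ∀ v v' w : V, bh (v + v') w = bh v w + bh v' w)
    (haddr : ∀ v w w' : V, bh v (w + w') = bh v w + bh v w')
    (hsmul : ∀ (a : E) (v w : V), bh (a • v) w = a * bh v w)
    (g : V →ₗ[E] V) :
    (∀ v w : V, ℓ (bh (g v) (g w)) = ℓ (bh v w)) ↔
      (∀ v w : V, bh (g v) (g w) = bh v w) := by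
  constructor
  · intro H v w
    by_contra hne
    set d := bh (g v) (g w) - bh v w with hd
    have hdne : d ≠ 0 := sub_ne_zero.mpr hne
    obtain ⟨e, he⟩ : ∃ e : E, ℓ e ≠ 0 := by
      by_contra hc
      push_neg at hc
      exact hℓ (LinearMap.ext fun x => hc x)
    have key : ∀ a : E, ℓ (a * d) = 0 := by
      intro a
      have h1 := H (a • v) w
      have h2 : g (a • v) = a • g v := g.map_smul a v
      rw [h2, hsmul, hsmul] at h1
      have : a * bh (g v) (g w) - a * bh v w = a * d := by ring
      calc ℓ (a * d) = ℓ (a * bh (g v) (g w) - a * bh v w) := by rw [this]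
        _ = ℓ (a * bh (g v) (g w)) - ℓ (a * bh v w) := map_sub ℓ _ _
        _ = 0 := by rw [h1]; ring
    have := key (e * d⁻¹)
    rw [mul_assoc, inv_mul_cancel₀ hdne, mul_one] at this
    exact he this
  · intro H v w
    rw [H]
end

section
/- Let F ⊆ E be fields, 𝔬_F a subring of F, 𝔬_E a subring of E, and c ∈ E a nonzero element. Let ℓ : E → F be an F-linear map such that {z ∈ E : ℓ(z) ∈ 𝔬_F} = c • 𝔬_E (the set of elements c·t with t ∈ 𝔬_E). Let V be an E-vector space, ĥ : V × V → E additive in each variable and E-linear in the first variable, and for a subset L ⊆ V define L^# = {v ∈ V : ℓ(ĥ(v,l)) ∈ 𝔬_F for all l ∈ L} and L^♮ = {v ∈ V : ĥ(v,l) ∈ 𝔬_E for all l ∈ L}. Then L^# = c • L^♮. -/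
open Pointwise
/-- Proposition 1.4.1: if `ℓ⁻¹(𝔬_F) = c • 𝔬_E`, then the `𝔬_F`-dual of `L` with
respect to `h = ℓ ∘ bh` equals `c` times the `𝔬_E`-dual of `L` with respect to `bh`. -/
theorem stmt_2 {F E V : Type*} [Field F] [Field E] [Algebra F E]
    [AddCommGroup V] [Module E V]
    (oF : Subring F) (oE : Subring E)
    (c : E) (hc : c ≠ 0)
    (ℓ : E →ₗ[F] F)
    (hℓ : {z : E | ℓ z ∈ oF} = c • (oE : Set E))
    (bh : V → V → E)
    (haddl : ∀ v v' w : V, bh (v + v') w = bh v w + bh v' w)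
    (haddr : ∀ v w w' : V, bh v (w + w') = bh v w + bh v w')
    (hsmul : ∀ (a : E) (v w : V), bh (a • v) w = a * bh v w)
    (L : Set V) :
    {v : V | ∀ l ∈ L, ℓ (bh v l) ∈ oF} = c • {v : V | ∀ l ∈ L, bh v l ∈ oE} := by
  ext v
  have key : ∀ z : E, ℓ z ∈ oF ↔ c⁻¹ * z ∈ oE := by
    intro z
    constructor
    · intro hz
      have : z ∈ {z : E | ℓ z ∈ oF} := hz
      rw [hℓ] at this
      obtain ⟨t, ht, rfl⟩ := this
      simpa [smul_eq_mul, inv_mul_cancel_left₀ hc] using ht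
    · intro hz
      have : z ∈ c • (oE : Set E) := ⟨c⁻¹ * z, hz, by exact mul_inv_cancel_left₀ hc z⟩
      rw [← hℓ] at this
      exact this
  constructor
  · intro hv
    refine ⟨c⁻¹ • v, fun l hl => ?_, by simp [smul_smul, mul_inv_cancel₀ hc]⟩
    rw [hsmul]
    exact (key _).mp (hv l hl)
  · rintro ⟨w, hw, rfl⟩
    intro l hl
    rw [hsmul]
    have : c⁻¹ * (c * bh w l) ∈ oE := by
      rw [inv_mul_cancel_left₀ hc]; exact hw l hl
    exact (key _).mpr this
end

section
/- Let F ⊆ E be fields, 𝔬_F a subring of F, 𝔬_E a subring of E, σ : E → E a ring automorphism with σ ∘ σ = id, and ϖ ∈ 𝔬_E a nonzero element with σ(ϖ) = ϖ which is invertible in E. Let ℓ : E → F be an F-linear map such that {z ∈ E : ℓ(z) ∈ 𝔬_F} = ϖ⁻¹ • 𝔬_E. Let V be an E-vector space and ĥ : V × V → E additive in each variable, E-linear in the first variable and σ-semilinear in the second variable (ĥ(v, a•w) = σ(a)·ĥ(v,w)). For a subset L ⊆ V define L^# = {v ∈ V : ℓ(ĥ(v,l)) ∈ 𝔬_F for all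 l ∈ L} and L^♮ = {v ∈ V : ĥ(v,l) ∈ 𝔬_E for all l ∈ L}. If L is an 𝔬_E-submodule of V with ϖ • L^♮ = L, then the set M = ϖ⁻¹ • L satisfies M^# = M. -/
open Pointwise

/-- Proposition 1.4.2 (2): in the ramified case, where `ℓ⁻¹(𝔬_F) = ϖ⁻¹ • 𝔬_E`,
if `L` is an `𝔬_E`-submodule with `ϖ • L^♮ = L`, then `M = ϖ⁻¹ • L` satisfies `M^# = M`. -/
theorem stmt_3 {F E V : Type*} [Field F] [Field E] [Algebra F E]
    [AddCommGroup V] [Module E V]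
    (oF : Subring F) (oE : Subring E)
    (σ : E →+* E) (hσ2 : ∀ z : E, σ (σ z) = z)
    (ϖ : E) (hϖE : ϖ ∈ oE) (hϖ0 : ϖ ≠ 0) (hσϖ : σ ϖ = ϖ)
    (ℓ : E →ₗ[F] F)
    (hℓ : {z : E | ℓ z ∈ oF} = ϖ⁻¹ • (oE : Set E))
    (bh : V → V → E)
    (haddl : ∀ v v' w : V, bh (v + v') w = bh v w + bh v' w)
    (haddr : ∀ v w w' : V, bh v (w + w') = bh v w + bh v w')
    (hsmul : ∀ (a : E) (v w : V), bh (a • v) w = a * bh v w)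
    (hsemi : ∀ (a : E) (v w : V), bh v (a • w) = σ a * bh v w)
    (L : Set V)
    (hL0 : (0 : V) ∈ L)
    (hLadd : ∀ v ∈ L, ∀ w ∈ L, v + w ∈ L)
    (hLsmul : ∀ a ∈ oE, ∀ v ∈ L, a • v ∈ L)
    (hLdual : ϖ • {v : V | ∀ l ∈ L, bh v l ∈ oE} = L) :
    {v : V | ∀ l ∈ ϖ⁻¹ • L, ℓ (bh v l) ∈ oF} = ϖ⁻¹ • L := by
  have hσϖinv : σ ϖ⁻¹ = ϖ⁻¹ := by rw [map_inv₀, hσϖ]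
  have key : {v : V | ∀ l ∈ ϖ⁻¹ • L, ℓ (bh v l) ∈ oF}
      = {v : V | ∀ l ∈ L, bh v l ∈ oE} := by
    ext v
    simp only [Set.mem_setOf_eq]
    constructor
    · intro h l hl
      have h1 := h (ϖ⁻¹ • l) (Set.smul_mem_smul_set hl)
      rw [hsemi, hσϖinv] at h1
      have h2 : (ϖ⁻¹ * bh v l) ∈ ϖ⁻¹ • (oE : Set E) := hℓ ▸ h1
      obtain ⟨z, hz, hzeq⟩ := h2
      simp only [smul_eq_mul] at hzeq
      have : z = bh v l := by
        field_simp at hzeq; exact hzeq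
      rwa [← this]
    · intro h l hl
      obtain ⟨m, hm, rfl⟩ := hl
      rw [hsemi, hσϖinv]
      have h2 : (ϖ⁻¹ * bh v m) ∈ ϖ⁻¹ • (oE : Set E) :=
        ⟨bh v m, h m hm, by simp [smul_eq_mul]⟩
      show ϖ⁻¹ * bh v m ∈ {z : E | ℓ z ∈ oF}
      rw [hℓ]; exact h2
  have h3 : ϖ⁻¹ • (ϖ • {v : V | ∀ l ∈ L, bh v l ∈ oE}) = ϖ⁻¹ • L :=
    congrArg _ hLdual
  rw [inv_smul_smul₀ hϖ0] at h3
  rw [key, ← h3]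
end

section
/- Let G be a group and γ : G → G a group automorphism with γ ∘ γ = id. Let U and V be subgroups of G such that γ(U) = U and γ(V) = V (setwise), U normalizes V, and every element of U ∩ V has odd finite order. Then {g ∈ G : g = u·v for some u ∈ U, v ∈ V, and γ(g) = g} = {u·v : u ∈ U, v ∈ V, γ(u) = u, γ(v) = v}; in other words, (UV)^Γ = U^Γ·V^Γ, where X^Γ denotes the γ-fixed points of X. -/
/-- Lemma 3.2.2: if `U` and `V` are `γ`-stable subgroups, `U` normalizes `V`,
and every element of `U ∩ V` has odd finite order, then `(UV)^Γ = U^Γ · V^Γ`. -/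
theorem stmt_5 {G : Type*} [Group G] (γ : G →* G) (hγ2 : ∀ g : G, γ (γ g) = g)
    (U V : Subgroup G)
    (hU : ∀ g : G, g ∈ U ↔ γ g ∈ U) (hV : ∀ g : G, g ∈ V ↔ γ g ∈ V)
    (hnorm : ∀ u ∈ U, ∀ v ∈ V, u * v * u⁻¹ ∈ V)
    (hodd : ∀ g : G, g ∈ U → g ∈ V → ∃ n : ℕ, Odd n ∧ g ^ n = 1) :
    {g : G | (∃ u ∈ U, ∃ v ∈ V, g = u * v) ∧ γ g = g}
      = {g : G | ∃ u ∈ U, ∃ v ∈ V, γ u = u ∧ γ v = v ∧ g = u * v} := by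
  ext g
  simp only [Set.mem_setOf_eq]
  constructor
  · rintro ⟨⟨u, hu, v, hv, rfl⟩, hfix⟩
    -- t = u⁻¹ γ(u)
    set t : G := u⁻¹ * γ u with ht
    have hγuv : γ u * γ v = u * v := by simpa using hfix
    have htU : t ∈ U := U.mul_mem (U.inv_mem hu) ((hU u).mp hu)
    have htv : t = v * (γ v)⁻¹ := by
      rw [ht]
      have : γ u = u * v * (γ v)⁻¹ := by
        rw [← hγuv]; group
      rw [this]; group
    have htV : t ∈ V := by
      rw [htv]; exact V.mul_mem hv (V.inv_mem ((hV v).mp hv))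
    have hγt : γ t = t⁻¹ := by
      rw [ht]; simp [hγ2]
    obtain ⟨n, ⟨m, hm⟩, htn⟩ := hodd t htU htV
    -- s = t^(m+1), s^2 = t
    set s : G := t ^ (m + 1) with hs
    have hs2 : s * s = t := by
      rw [hs, ← pow_add]
      have : m + 1 + (m + 1) = n + 1 := by omega
      rw [this, pow_succ, htn, one_mul]
    have hγs : γ s = s⁻¹ := by
      rw [hs, map_pow, hγt, inv_pow]
    refine ⟨u * s, U.mul_mem hu (U.pow_mem htU _), s⁻¹ * v, V.mul_mem (V.inv_mem ((V.pow_mem htV _))) hv,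
      ?_, ?_, by group⟩
    · rw [map_mul, hγs]
      have : γ u = u * t := by rw [ht]; group
      rw [this, ← hs2]; group
    · rw [map_mul, map_inv, hγs]
      have hγv : γ v = t⁻¹ * v := by
        have : γ v = (γ u)⁻¹ * (u * v) := by rw [← hγuv]; group
        rw [this, ht]; group
      rw [hγv, ← hs2]; group
  · rintro ⟨u, hu, v, hv, hγu, hγv, rfl⟩
    exact ⟨⟨u, hu, v, hv, rfl⟩, by rw [map_mul, hγu, hγv]⟩
end

section
/- Let q and f be natural numbers with q ≥ 2 and f odd, and let K be a finite field with exactly q^{2f} elements. Then there exists a group homomorphism θ : K^× → ℂ^× such that θ^{q^f + 1} is the trivial homomorphism, and for every integer i with 1 ≤ i ≤ f − 1 the homomorphism x ↦ θ(x^{q^{2i}}) is different from θ. -/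
/-- Helper: `(q : ZMod m) ^ n = 1 ↔ m ∣ q ^ n - 1` when `q ≥ 1`. -/
lemma aux_cast_pow_eq_one (m q n : ℕ) (hq : 1 ≤ q) :
    ((q : ZMod m) ^ n = 1) ↔ m ∣ q ^ n - 1 := by
  have h1 : 1 ≤ q ^ n := Nat.one_le_pow _ _ hq
  rw [← ZMod.natCast_eq_zero_iff]
  rw [Nat.cast_sub h1]
  push_cast
  constructor
  · intro h; rw [h]; ring
  · intro h; have := sub_eq_zero.mp h; simpa using this

/-- Key number-theoretic fact: `q^f + 1 ∤ q^{2i} - 1` for `1 ≤ i ≤ f - 1`, `f` odd. -/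
lemma aux_not_dvd (q f i : ℕ) (hq : 2 ≤ q) (hf : Odd f)
    (hi1 : 1 ≤ i) (hif : i ≤ f - 1) : ¬ (q ^ f + 1 ∣ q ^ (2 * i) - 1) := by
  intro hdvd
  set m := q ^ f + 1 with hm
  have hq1 : 1 ≤ q := by omega
  have hf3 : 3 ≤ f := by
    rcases hf with ⟨k, hk⟩
    omega
  -- d = gcd i f, then 2*d < f
  set d := Nat.gcd i f with hd
  have hd1 : 1 ≤ d := Nat.gcd_pos_of_pos_left _ (by omega)
  have hdf : d ∣ f := Nat.gcd_dvd_right i f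
  have hdi : d ∣ i := Nat.gcd_dvd_left i f
  have hdlt : d < f := lt_of_le_of_lt (Nat.le_of_dvd (by omega) hdi) (by omega)
  have h2d : 2 * d < f := by
    obtain ⟨k, hk⟩ := hdf
    have hkodd : Odd k := (Nat.odd_mul.mp (hk ▸ hf)).2
    have hk1 : k ≠ 1 := by rintro rfl; simp at hk; omega
    have hk0 : k ≠ 0 := by rintro rfl; simp at hk; omega
    have hk3 : 3 ≤ k := by rcases hkodd with ⟨t, ht⟩; omega
    have h := (Nat.mul_lt_mul_right (show 0 < d by omega)).mpr (show 2 < k by omega)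
    rw [hk, Nat.mul_comm d k]
    exact h
  -- work in ZMod m
  have hx2i : ((q : ZMod m)) ^ (2 * i) = 1 := (aux_cast_pow_eq_one m q (2 * i) hq1).mpr hdvd
  have hNfac : q ^ (2 * f) - 1 = (q ^ f + 1) * (q ^ f - 1) := by
    have : q ^ (2 * f) = (q ^ f) ^ 2 := by rw [← pow_mul]; ring_nf
    rw [this]
    have := Nat.sq_sub_sq (q ^ f) 1
    simpa using this
  have hx2f : ((q : ZMod m)) ^ (2 * f) = 1 := by
    refine (aux_cast_pow_eq_one m q (2 * f) hq1).mpr ?_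
    rw [hNfac]; exact Dvd.intro _ rfl
  have hordi : orderOf ((q : ZMod m)) ∣ 2 * i := orderOf_dvd_of_pow_eq_one hx2i
  have hordf : orderOf ((q : ZMod m)) ∣ 2 * f := orderOf_dvd_of_pow_eq_one hx2f
  have hordd : orderOf ((q : ZMod m)) ∣ 2 * d := by
    have := Nat.dvd_gcd hordi hordf
    rwa [Nat.gcd_mul_left] at this
  have hx2d : ((q : ZMod m)) ^ (2 * d) = 1 := orderOf_dvd_iff_pow_eq_one.mp hordd
  have hdvd2d : m ∣ q ^ (2 * d) - 1 := (aux_cast_pow_eq_one m q (2 * d) hq1).mp hx2d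
  -- but q^{2d} - 1 is positive and < m
  have hpos : 0 < q ^ (2 * d) - 1 := by
    have : 2 ≤ q ^ (2 * d) := by
      calc 2 ≤ q := hq
      _ = q ^ 1 := (pow_one q).symm
      _ ≤ q ^ (2 * d) := Nat.pow_le_pow_right (by omega) (by omega)
    omega
  have hlt : q ^ (2 * d) - 1 < m := by
    have : q ^ (2 * d) ≤ q ^ f := Nat.pow_le_pow_right (by omega) (by omega)
    omega
  exact absurd (Nat.le_of_dvd hpos hdvd2d) (by omega)

/-- Existence of a regular character (proof of Corollary 5.4.3): for `K` a finite
field with `q^{2f}` elements (`q ≥ 2`, `f` odd), there is a character `θ` of `K^×`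
with `θ^{q^f + 1} = 1` and `θ^{q^{2i}} ≠ θ` for all `1 ≤ i ≤ f - 1`. -/
theorem stmt_10 (q f : ℕ) (hq : 2 ≤ q) (hf : Odd f)
    (K : Type*) [Field K] [Fintype K] (hK : Fintype.card K = q ^ (2 * f)) :
    ∃ θ : Kˣ →* ℂˣ, θ ^ (q ^ f + 1) = 1 ∧
      ∀ i : ℕ, 1 ≤ i → i ≤ f - 1 → ∃ x : Kˣ, θ (x ^ q ^ (2 * i)) ≠ θ x := by
  have hf0 : 0 < f := hf.pos
  haveI : DecidableEq K := Classical.decEq K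
  set m := q ^ f + 1 with hm
  have hm0 : m ≠ 0 := by positivity
  -- a primitive m-th root of unity in ℂˣ
  have hζ₀ : IsPrimitiveRoot (Complex.exp (2 * Real.pi * Complex.I / m)) m :=
    Complex.isPrimitiveRoot_exp m hm0
  set ζ : ℂˣ := (hζ₀.isUnit hm0).unit with hζdef
  have hζ : IsPrimitiveRoot ζ m := hζ₀.isUnit_unit hm0
  have hordζ : orderOf ζ = m := hζ.eq_orderOf.symm
  -- a generator of Kˣ
  obtain ⟨g, hg⟩ := IsCyclic.exists_generator (α := Kˣ)
  have hcard : Fintype.card Kˣ = q ^ (2 * f) - 1 := by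
    rw [Fintype.card_units, hK]
  have hordg : orderOf g = q ^ (2 * f) - 1 := by
    rw [orderOf_eq_card_of_forall_mem_zpowers hg, Nat.card_eq_fintype_card, hcard]
  have hNfac : q ^ (2 * f) - 1 = (q ^ f + 1) * (q ^ f - 1) := by
    have h1 : q ^ (2 * f) = (q ^ f) ^ 2 := by rw [← pow_mul]; ring_nf
    rw [h1]
    have := Nat.sq_sub_sq (q ^ f) 1
    simpa using this
  have hmdvd : m ∣ q ^ (2 * f) - 1 := by rw [hNfac]; exact Dvd.intro _ rfl
  have hdvd : orderOf ζ ∣ orderOf g := by rw [hordζ, hordg]; exact hmdvd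
  -- the character
  refine ⟨monoidHomOfForallMemZpowers hg hdvd, ?_, ?_⟩
  · -- θ ^ m = 1
    ext x
    obtain ⟨k, hk⟩ := Submonoid.mem_powers_iff _ _ |>.mp
      (mem_powers_iff_mem_zpowers.mpr (hg x))
    simp only [MonoidHom.pow_apply, MonoidHom.one_apply]
    rw [← hk, map_pow, monoidHomOfForallMemZpowers_apply_gen, ← pow_mul, mul_comm, pow_mul,
      hζ.pow_eq_one, one_pow]
  · intro i hi1 hif
    refine ⟨g, ?_⟩
    rw [map_pow, monoidHomOfForallMemZpowers_apply_gen]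
    intro hcon
    have h1 : ζ ^ q ^ (2 * i) = ζ ^ 1 := by rw [pow_one]; exact hcon
    have hmod : q ^ (2 * i) ≡ 1 [MOD m] := by
      have := pow_eq_pow_iff_modEq.mp h1
      rwa [hordζ] at this
    have hdvd' : m ∣ q ^ (2 * i) - 1 :=
      (Nat.modEq_iff_dvd' (Nat.one_le_pow _ _ (by omega))).mp hmod.symm
    exact aux_not_dvd q f i hq hf hi1 hif hdvd'
end

section
/- Let G be a group and γ : G → G a group automorphism with γ ∘ γ = id. Let U and V be subgroups of G such that γ(U) = U and γ(V) = V, and every element of U ∩ V has odd finite order. If u ∈ U and v ∈ V satisfy γ(u·v) = u·v, then there exists d ∈ U ∩ V such that γ(u·d) = u·d and γ(d⁻¹·v) = d⁻¹·v; in particular u·v = (u·d)·(d⁻¹·v) is a product of a γ-fixed element of U and a γ-fixed element of V. -/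
/-- Constructive form of Lemma 3.2.2: a `γ`-fixed product `u·v` with `u ∈ U`, `v ∈ V`
can be refactored as a product of a `γ`-fixed element of `U` and a `γ`-fixed element
of `V`, by adjusting with some `d ∈ U ∩ V`. -/
theorem stmt_14 {G : Type*} [Group G] (γ : G →* G) (hγ2 : ∀ g : G, γ (γ g) = g)
    (U V : Subgroup G)
    (hU : ∀ g : G, g ∈ U ↔ γ g ∈ U) (hV : ∀ g : G, g ∈ V ↔ γ g ∈ V)
    (hodd : ∀ g : G, g ∈ U → g ∈ V → ∃ n : ℕ, Odd n ∧ g ^ n = 1)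
    (u v : G) (hu : u ∈ U) (hv : v ∈ V) (hfix : γ (u * v) = u * v) :
    ∃ d : G, d ∈ U ∧ d ∈ V ∧ γ (u * d) = u * d ∧ γ (d⁻¹ * v) = d⁻¹ * v := by
  set w : G := (γ u)⁻¹ * u with hw
  have hmul : γ u * γ v = u * v := by rw [← map_mul]; exact hfix
  have hγu : γ u = u * w⁻¹ := by rw [hw]; group
  have hγv : γ v = w * v := by
    have : γ v = (γ u)⁻¹ * (u * v) := by rw [← hmul]; group
    rw [this, hw]; group
  have hweq : w = γ v * v⁻¹ := by rw [hγv]; group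
  have hwU : w ∈ U := U.mul_mem (U.inv_mem ((hU u).mp hu)) hu
  have hwV : w ∈ V := by
    rw [hweq]; exact V.mul_mem ((hV v).mp hv) (V.inv_mem hv)
  have hγw : γ w = w⁻¹ := by
    rw [hw, map_mul, map_inv, hγ2, mul_inv_rev, inv_inv]
  obtain ⟨n, ⟨k, hk⟩, hwn⟩ := hodd w hwU hwV
  have hkey : w ^ (k + 1) = (w ^ k)⁻¹ := by
    have : w ^ (k + 1) * w ^ k = 1 := by
      rw [← pow_add]
      rw [hk] at hwn
      rw [show k + 1 + k = 2 * k + 1 by ring]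
      exact hwn
    exact eq_inv_of_mul_eq_one_left this
  refine ⟨w ^ k, U.pow_mem hwU k, V.pow_mem hwV k, ?_, ?_⟩
  · rw [map_mul, map_pow, hγw, hγu, inv_pow, mul_assoc, ← mul_inv_rev, ← pow_succ,
      hkey, inv_inv]
  · rw [map_mul, map_inv, map_pow, hγw, hγv, inv_pow, inv_inv, ← mul_assoc, ← pow_succ, hkey]
end
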